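/- Let (g,⟨·,·⟩,D,θ) be a full extrinsic symmetric triple such that g contains no nonzero ideal that is a simple Lie algebra and such that the restriction of ⟨·,·⟩ to g₊⁻ = ker(θ − id) ∩ ker(D² + id) is positive definite. Then g is an abelian Lie algebra, ⟨·,·⟩ is positive definite on all of g, and D² = −id. -/

import Mathlib

/-- The span of all brackets of elements of two submodules of a Lie algebra. -/
def bracketSpan {g : Type*} [LieRing g] [LieAlgebra ℝ g] (s t : Submodule ℝ g) :
    Submodule ℝ g :=
  Submodule.span ℝ {z | ∃ x ∈ s, ∃ y ∈ t, z = ⁅x, y⁆}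

set_option maxHeartbeats 2000000 in
/-- A full Riemannian extrinsic symmetric triple without simple ideals is abelian,
has a positive definite invariant form, and satisfies D² = −id. -/
theorem stmt4 {g : Type*} [LieRing g] [LieAlgebra ℝ g] [Module.Finite ℝ g]
    (B : LinearMap.BilinForm ℝ g)
    (hsymm : ∀ x y, B x y = B y x)
    (hnd : B.Nondegenerate)
    (hinv : ∀ x y z : g, B ⁅x, y⁆ z + B y ⁅x, z⁆ = 0)
    (D : g →ₗ[ℝ] g)
    (hDder : ∀ x y : g, D ⁅x, y⁆ = ⁅D x, y⁆ + ⁅x, D y⁆)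
    (hDskew : ∀ x y, B (D x) y = -(B x (D y)))
    (hD3 : D ∘ₗ D ∘ₗ D = -D)
    (θ : g →ₗ[ℝ] g)
    (hθ2 : θ ∘ₗ θ = LinearMap.id)
    (hθlie : ∀ x y : g, θ ⁅x, y⁆ = ⁅θ x, θ y⁆)
    (hθiso : ∀ x y, B (θ x) (θ y) = B x y)
    (hDθ : D ∘ₗ θ = -(θ ∘ₗ D))
    (hext : bracketSpan
        (LinearMap.ker (θ - LinearMap.id) ⊓ LinearMap.ker (D ∘ₗ D + LinearMap.id))
        (LinearMap.ker (θ - LinearMap.id) ⊓ LinearMap.ker (D ∘ₗ D + LinearMap.id)) =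
        LinearMap.ker (θ - LinearMap.id) ⊓ LinearMap.ker D)
    (hfull : bracketSpan
        (LinearMap.ker (θ - LinearMap.id) ⊓ LinearMap.ker (D ∘ₗ D + LinearMap.id))
        (LinearMap.ker (θ + LinearMap.id) ⊓ LinearMap.ker (D ∘ₗ D + LinearMap.id)) =
        LinearMap.ker (θ + LinearMap.id) ⊓ LinearMap.ker D)
    (hnosimple : ¬ ∃ I : LieIdeal ℝ g, I ≠ ⊥ ∧ LieAlgebra.IsSimple ℝ I)
    (hriem : ∀ x ∈ LinearMap.ker (θ - LinearMap.id) ⊓ LinearMap.ker (D ∘ₗ D + LinearMap.id),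
      x ≠ 0 → 0 < B x x) :
    (∀ x y : g, ⁅x, y⁆ = 0) ∧
      (∀ x : g, x ≠ 0 → 0 < B x x) ∧
      D ∘ₗ D = -LinearMap.id := by
  -- pointwise forms of the operator identities
  have hD3' : ∀ x, D (D (D x)) = -D x := fun x => by
    simpa using LinearMap.congr_fun hD3 x
  have hθ2' : ∀ x, θ (θ x) = x := fun x => by
    simpa using LinearMap.congr_fun hθ2 x
  have hDθ' : ∀ x, D (θ x) = -θ (D x) := fun x => by
    simpa using LinearMap.congr_fun hDθ x
  -- projections
  have hPker : ∀ x, D (x + D (D x)) = 0 := fun x => by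
    rw [map_add, hD3' x, add_neg_cancel]
  have hQmem : ∀ x, D (D (-(D (D x)))) = -(-(D (D x))) := fun x => by
    simp only [map_neg]; rw [hD3' (D x)]
  have hPQ : ∀ x : g, x = (x + D (D x)) + (-(D (D x))) := fun x => by abel
  -- bracket closure lemmas
  have hBrPP : ∀ {x y : g}, D x = 0 → D y = 0 → D ⁅x, y⁆ = 0 := by
    intro x y hx hy; rw [hDder, hx, hy, zero_lie, lie_zero, add_zero]
  have hBrPM : ∀ {x y : g}, D x = 0 → D (D y) = -y → D (D ⁅x, y⁆) = -⁅x, y⁆ := by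
    intro x y hx hy
    rw [hDder, hx, zero_lie, zero_add, hDder, hx, zero_lie, zero_add, hy, lie_neg]
  have hBrMM : ∀ {x y : g}, D (D x) = -x → D (D y) = -y → D ⁅x, y⁆ = 0 := by
    intro x y hx hy
    have h2 : D (D ⁅x, y⁆) = -((2:ℝ) • ⁅x, y⁆) + (2:ℝ) • ⁅D x, D y⁆ := by
      rw [hDder, map_add, hDder, hDder, hx, hy, neg_lie, lie_neg]
      module
    have h2' : D ⁅D x, D y⁆ = -⁅x, D y⁆ + -⁅D x, y⁆ := by
      rw [hDder, hx, hy, neg_lie, lie_neg]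
    have h3 : D (D (D ⁅x, y⁆)) = -((4:ℝ) • D ⁅x, y⁆) := by
      rw [h2, map_add, map_neg, map_smul, map_smul, h2', hDder]
      module
    have h4 := hD3' ⁅x, y⁆
    rw [h3] at h4
    have h5 : (3:ℝ) • D ⁅x, y⁆ = 0 := by
      have h6 : -((4:ℝ) • D ⁅x,y⁆) + (4:ℝ) • D ⁅x,y⁆ = -D ⁅x,y⁆ + (4:ℝ) • D ⁅x,y⁆ := by
        rw [h4]
      rw [neg_add_cancel] at h6
      have h7 : (3:ℝ) • D ⁅x, y⁆ = -D ⁅x, y⁆ + (4:ℝ) • D ⁅x, y⁆ := by module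
      rw [h7, ← h6]
    have := smul_eq_zero.mp h5
    rcases this with h | h
    · norm_num at h
    · exact h
  -- orthogonality of ker D and ker (D²+1)
  have hOrthPM : ∀ {x y : g}, D x = 0 → D (D y) = -y → B x y = 0 := by
    intro x y hx hy
    have h1 : B x y = -(B x (D (D y))) := by rw [hy]; simp
    rw [h1, ← hDskew, hx]; simp
  -- θ preserves the D-eigenspaces
  have hθGp : ∀ {x : g}, D x = 0 → D (θ x) = 0 := by
    intro x hx; rw [hDθ', hx, map_zero, neg_zero]
  have hθGm : ∀ {x : g}, D (D x) = -x → D (D (θ x)) = -θ x := by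
    intro x hx
    rw [hDθ', map_neg, hDθ', neg_neg, hx, map_neg]
  have hperp : ∀ {x y : g}, θ x = x → θ y = -y → B x y = 0 := by
    intro x y hx hy
    have h := hθiso x y
    rw [hx, hy, map_neg] at h
    have : B x y + B x y = 0 := by
      nth_rewrite 1 [← h]; abel
    linarith [this]
  -- the set of brackets of two elements of ker(D²+1)
  set Sgen : Set g := {z | ∃ u, D (D u) = -u ∧ ∃ w, D (D w) = -w ∧ z = ⁅u, w⁆} with hSgen
  -- every element of ker D lies in the span of Sgen
  have hspan : ∀ x, D x = 0 → x ∈ Submodule.span ℝ Sgen := by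
    intro x hx
    have hsub : ∀ s t : Submodule ℝ g,
        s ≤ LinearMap.ker (D ∘ₗ D + LinearMap.id) →
        t ≤ LinearMap.ker (D ∘ₗ D + LinearMap.id) →
        bracketSpan s t ≤ Submodule.span ℝ Sgen := by
      intro s t hs ht
      apply Submodule.span_le.mpr
      rintro z ⟨u, hu, w, hw, rfl⟩
      apply Submodule.subset_span
      refine ⟨u, ?_, w, ?_, rfl⟩
      · have := hs hu; rw [LinearMap.mem_ker] at this
        have := congrArg (fun t => t - u) this
        simpa [sub_eq_iff_eq_add, LinearMap.add_apply, LinearMap.comp_apply] using this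
      · have := ht hw; rw [LinearMap.mem_ker] at this
        have := congrArg (fun t => t - w) this
        simpa [sub_eq_iff_eq_add, LinearMap.add_apply, LinearMap.comp_apply] using this
    have hmem1 : (1/2 : ℝ) • (x + θ x) ∈ Submodule.span ℝ Sgen := by
      apply Submodule.smul_mem
      have hmem : x + θ x ∈ LinearMap.ker (θ - LinearMap.id) ⊓ LinearMap.ker D := by
        refine Submodule.mem_inf.mpr ⟨?_, ?_⟩
        · rw [LinearMap.mem_ker, LinearMap.sub_apply, map_add, hθ2' x, LinearMap.id_apply]
          abel
        · rw [LinearMap.mem_ker, map_add, hx, hθGp hx, add_zero]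
      rw [← hext] at hmem
      exact hsub _ _ inf_le_right inf_le_right hmem
    have hmem2 : (1/2 : ℝ) • (x - θ x) ∈ Submodule.span ℝ Sgen := by
      apply Submodule.smul_mem
      have hmem : x - θ x ∈ LinearMap.ker (θ + LinearMap.id) ⊓ LinearMap.ker D := by
        refine Submodule.mem_inf.mpr ⟨?_, ?_⟩
        · rw [LinearMap.mem_ker, LinearMap.add_apply, map_sub, hθ2' x, LinearMap.id_apply]
          abel
        · rw [LinearMap.mem_ker, map_sub, hx, hθGp hx, sub_zero]
      rw [← hfull] at hmem
      exact hsub _ _ inf_le_right inf_le_right hmem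
    have hxeq : x = (1/2 : ℝ) • (x + θ x) + (1/2 : ℝ) • (x - θ x) := by module
    rw [hxeq]
    exact Submodule.add_mem _ hmem1 hmem2
  -- S1 : an element of ker D which commutes with ker(D²+1) is zero
  have hS1 : ∀ c, D c = 0 → (∀ u, D (D u) = -u → ⁅c, u⁆ = 0) → c = 0 := by
    intro c hc hcu
    apply hnd.1
    intro y
    have h1 : B c (-(D (D y))) = 0 := hOrthPM hc (hQmem y)
    have h2 : B c (y + D (D y)) = 0 := by
      have hmem := hspan _ (hPker y)
      have hle : Submodule.span ℝ Sgen ≤ LinearMap.ker (B c) := by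
        apply Submodule.span_le.mpr
        rintro z ⟨u, hu, w, hw, rfl⟩
        simp only [SetLike.mem_coe, LinearMap.mem_ker]
        have h3 := hinv u w c
        have h4 : ⁅u, c⁆ = 0 := by
          rw [← neg_eq_zero, lie_skew]
          exact hcu u hu
        rw [h4] at h3
        simp only [map_zero, add_zero] at h3
        rw [hsymm]
        exact h3
      exact hle hmem
    have := hPQ y
    calc B c y = B c ((y + D (D y)) + (-(D (D y)))) := by rw [← hPQ y]
    _ = 0 := by rw [map_add, h1, h2, add_zero]
  -- S2 : B is positive definite on ker(D²+1)
  have hS2 : ∀ x : g, D (D x) = -x → x ≠ 0 → 0 < B x x := by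
    intro x hx hne
    have hθa : θ ((1/2:ℝ) • (x + θ x)) = (1/2:ℝ) • (x + θ x) := by
      rw [map_smul, map_add, hθ2' x]; rw [add_comm]
    have hθb : θ ((1/2:ℝ) • (x - θ x)) = -((1/2:ℝ) • (x - θ x)) := by
      rw [map_smul, map_sub, hθ2' x]; module
    set a := (1/2:ℝ) • (x + θ x) with ha
    set b := (1/2:ℝ) • (x - θ x) with hb
    have haGm : D (D a) = -a := by
      rw [ha, map_smul, map_smul, map_add, map_add, hx, hθGm hx]; module
    have hbGm : D (D b) = -b := by
      rw [hb, map_smul, map_smul, map_sub, map_sub, hx, hθGm hx]; module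
    have hcross : B a b = 0 := hperp hθa hθb
    have hxab : x = a + b := by rw [ha, hb]; module
    have hba : B b a = 0 := by rw [hsymm b a]; exact hcross
    have hBxx : B x x = B a a + B b b := by
      rw [hxab]
      simp only [map_add, LinearMap.add_apply]
      rw [hcross, hba]
      ring
    have hga : a ≠ 0 → 0 < B a a := by
      intro hane
      refine hriem a (Submodule.mem_inf.mpr ⟨?_, ?_⟩) hane
      · rw [LinearMap.mem_ker, LinearMap.sub_apply, hθa, LinearMap.id_apply, sub_self]
      · rw [LinearMap.mem_ker, LinearMap.add_apply, LinearMap.comp_apply, haGm,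
          LinearMap.id_apply, neg_add_cancel]
    have hgb : b ≠ 0 → 0 < B b b := by
      intro hbne
      set y := D b with hy
      have hθy : θ y = y := by
        have := hDθ' b
        rw [hθb, map_neg] at this
        have h2 : θ (D b) = D b := by
          have := congrArg Neg.neg this
          simpa using this.symm
        exact h2
      have hyGm : D (D y) = -y := by rw [hy]; exact hD3' b
      have hyne : y ≠ 0 := by
        intro h0
        apply hbne
        have : D y = -b := hbGm
        rw [h0, map_zero] at this
        simpa using this.symm
      have hByy : 0 < B y y :=
        hriem y (Submodule.mem_inf.mpr ⟨by rw [LinearMap.mem_ker, LinearMap.sub_apply, hθy,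
            LinearMap.id_apply, sub_self],
          by rw [LinearMap.mem_ker, LinearMap.add_apply, LinearMap.comp_apply, hyGm,
            LinearMap.id_apply, neg_add_cancel]⟩) hyne
      have : B y y = B b b := by
        rw [hy, hDskew b (D b), hbGm]
        simp [hsymm b (-b)]
      linarith [hByy, this]
    by_cases ha0 : a = 0
    · have hb0 : b ≠ 0 := by
        intro h; apply hne; rw [hxab, ha0, h, add_zero]
      have := hgb hb0
      rw [hBxx, ha0]
      simpa using this
    · by_cases hb0 : b = 0
      · have := hga ha0
        rw [hBxx, hb0]
        simpa using this
      · have h1 := hga ha0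
        have h2 := hgb hb0
        rw [hBxx]; linarith
  -- an element in both eigenspaces is zero
  have hGpGm0 : ∀ z : g, D z = 0 → D (D z) = -z → z = 0 := by
    intro z h1 h2
    rw [h1, map_zero] at h2
    simpa using h2.symm
  -- KEY LEMMA : an isotropic abelian ideal is trivial
  have hLEM : ∀ A : LieIdeal ℝ g, (∀ a ∈ A, ∀ b ∈ A, ⁅a, b⁆ = (0:g)) →
      (∀ a ∈ A, ∀ b ∈ A, B a b = 0) → ∀ a ∈ A, a = (0:g) := by
    intro A hab hiso
    have L1 : ∀ a ∈ A, D (D a) = -a → a = 0 := by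
      intro a ha hm
      by_contra hne
      exact absurd (hiso a ha a ha) (ne_of_gt (hS2 a hm hne))
    have L2 : ∀ a ∈ A, D a = 0 → a = 0 := by
      intro a ha h0
      refine hS1 a h0 ?_
      intro u hu
      have hmem : ⁅a, u⁆ ∈ A := by
        rw [← lie_skew]
        exact neg_mem (A.lie_mem ha)
      exact L1 _ hmem (hBrPM h0 hu)
    have L3 : ∀ b ∈ A, D (D b) = 0 → b = 0 := by
      intro b hb h
      apply L2 b hb
      have h3 := hD3' b
      rw [h, map_zero] at h3
      simpa using h3.symm
    -- component notation : for x : g, P x = x + D (D x) ∈ ker D, Q x = -(D (D x)) ∈ ker(D²+1)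
    -- splitting of the vanishing bracket of two elements of A
    have hsplit : ∀ a ∈ A, ∀ a' ∈ A,
        ⁅a + D (D a), -(D (D a'))⁆ + ⁅-(D (D a)), a' + D (D a')⁆ = 0 := by
      intro a ha a' ha'
      have h0 : ⁅a, a'⁆ = 0 := hab a ha a' ha'
      have hexp : (⁅a + D (D a), a' + D (D a')⁆ + ⁅-(D (D a)), -(D (D a'))⁆)
          + (⁅a + D (D a), -(D (D a'))⁆ + ⁅-(D (D a)), a' + D (D a')⁆) = 0 := by
        have : ⁅(a + D (D a)) + -(D (D a)), (a' + D (D a')) + -(D (D a'))⁆ = 0 := by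
          rw [← hPQ a, ← hPQ a']; exact h0
        conv_rhs => rw [← this]
        simp only [add_lie, lie_add]
        abel
      -- the first group is in ker D, the second in ker(D²+1)
      set s₁ := ⁅a + D (D a), a' + D (D a')⁆ + ⁅-(D (D a)), -(D (D a'))⁆ with hs₁
      set s₂ := ⁅a + D (D a), -(D (D a'))⁆ + ⁅-(D (D a)), a' + D (D a')⁆ with hs₂
      have hs₁P : D s₁ = 0 := by
        rw [hs₁, map_add, hBrPP (hPker a) (hPker a'),
          hBrMM (hQmem a) (hQmem a'), add_zero]
      have hs₂M : D (D s₂) = -s₂ := by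
        rw [hs₂, map_add, map_add, hBrPM (hPker a) (hQmem a')]
        have : ⁅-(D (D a)), a' + D (D a')⁆ = -⁅a' + D (D a'), -(D (D a))⁆ := (lie_skew _ _).symm
        rw [this, map_neg, map_neg, hBrPM (hPker a') (hQmem a)]
        abel
      -- s₁ = -s₂ lies in both eigenspaces
      have hs12 : s₁ = -s₂ := by
        have h5 : s₁ + s₂ = 0 := hexp
        have := congrArg (fun t => t - s₂) h5
        simpa [sub_eq_iff_eq_add] using this
      have hz : s₂ = 0 := by
        have hDz : D s₂ = 0 := by
          have : D (-s₂) = 0 := hs12 ▸ hs₁P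
          simpa using this
        exact hGpGm0 s₂ hDz hs₂M
      exact hz
    -- L4 : brackets of Q-components vanish
    have L4 : ∀ a ∈ A, ∀ a' ∈ A, ⁅-(D (D a)), -(D (D a'))⁆ = (0:g) := by
      intro a ha a' ha'
      have hb1 : ⁅-(D (D a')), a⁆ ∈ A := A.lie_mem ha
      have hb2 : ⁅-(D (D a)), a'⁆ ∈ A := A.lie_mem ha'
      -- the difference has vanishing Q-part
      have hQ0 : D (D (⁅-(D (D a')), a⁆ - ⁅-(D (D a)), a'⁆)) = 0 := by
        have e1 : ⁅-(D (D a')), a⁆ = ⁅-(D (D a')), a + D (D a)⁆ + ⁅-(D (D a')), -(D (D a))⁆ := by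
          rw [← lie_add, ← hPQ a]
        have e2 : ⁅-(D (D a)), a'⁆ = ⁅-(D (D a)), a' + D (D a')⁆ + ⁅-(D (D a)), -(D (D a'))⁆ := by
          rw [← lie_add, ← hPQ a']
        have hMa : D (D ⁅-(D (D a')), a + D (D a)⁆) = -⁅-(D (D a')), a + D (D a)⁆ := by
          have : ⁅-(D (D a')), a + D (D a)⁆ = -⁅a + D (D a), -(D (D a'))⁆ := (lie_skew _ _).symm
          rw [this, map_neg, map_neg, hBrPM (hPker a) (hQmem a')]
        have hMb : D (D ⁅-(D (D a)), a' + D (D a')⁆) = -⁅-(D (D a)), a' + D (D a')⁆ := by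
          have : ⁅-(D (D a)), a' + D (D a')⁆ = -⁅a' + D (D a'), -(D (D a))⁆ := (lie_skew _ _).symm
          rw [this, map_neg, map_neg, hBrPM (hPker a') (hQmem a)]
        have hPa : D (D ⁅-(D (D a')), -(D (D a))⁆) = 0 := by
          rw [hBrMM (hQmem a') (hQmem a), map_zero]
        have hPb : D (D ⁅-(D (D a)), -(D (D a'))⁆) = 0 := by
          rw [hBrMM (hQmem a) (hQmem a'), map_zero]
        rw [map_sub, map_sub, e1, e2, map_add, map_add, map_add, map_add, hMa, hMb, hPa, hPb]
        have hs := hsplit a ha a' ha'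
        have : ⁅-(D (D a')), a + D (D a)⁆ = -⁅a + D (D a), -(D (D a'))⁆ := (lie_skew _ _).symm
        rw [this]
        have h6 : ⁅a + D (D a), -(D (D a'))⁆ + ⁅-(D (D a)), a' + D (D a')⁆ = 0 := hs
        have h7 : ⁅-(D (D a)), a' + D (D a')⁆ = -⁅a + D (D a), -(D (D a'))⁆ := by
          have := congrArg (fun t => t - ⁅a + D (D a), -(D (D a'))⁆) h6
          simpa [sub_eq_iff_eq_add] using this
        rw [h7]
        abel
      have hdiff := L3 _ (sub_mem hb1 hb2) hQ0
      have heq : ⁅-(D (D a')), a⁆ = ⁅-(D (D a)), a'⁆ := by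
        have := congrArg (fun t => t + ⁅-(D (D a)), a'⁆) hdiff
        simpa [sub_add_cancel] using this
      -- compare the P-parts
      have hP1 : ⁅-(D (D a')), a⁆ + D (D ⁅-(D (D a')), a⁆) = ⁅-(D (D a')), -(D (D a))⁆ := by
        have e1 : ⁅-(D (D a')), a⁆ = ⁅-(D (D a')), a + D (D a)⁆ + ⁅-(D (D a')), -(D (D a))⁆ := by
          rw [← lie_add, ← hPQ a]
        have hMa : D (D ⁅-(D (D a')), a + D (D a)⁆) = -⁅-(D (D a')), a + D (D a)⁆ := by
          have : ⁅-(D (D a')), a + D (D a)⁆ = -⁅a + D (D a), -(D (D a'))⁆ := (lie_skew _ _).symm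
          rw [this, map_neg, map_neg, hBrPM (hPker a) (hQmem a')]
        have hPa : D (D ⁅-(D (D a')), -(D (D a))⁆) = 0 := by
          rw [hBrMM (hQmem a') (hQmem a), map_zero]
        rw [e1, map_add, map_add, hMa, hPa]
        abel
      have hP2 : ⁅-(D (D a)), a'⁆ + D (D ⁅-(D (D a)), a'⁆) = ⁅-(D (D a)), -(D (D a'))⁆ := by
        have e2 : ⁅-(D (D a)), a'⁆ = ⁅-(D (D a)), a' + D (D a')⁆ + ⁅-(D (D a)), -(D (D a'))⁆ := by
          rw [← lie_add, ← hPQ a']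
        have hMb : D (D ⁅-(D (D a)), a' + D (D a')⁆) = -⁅-(D (D a)), a' + D (D a')⁆ := by
          have : ⁅-(D (D a)), a' + D (D a')⁆ = -⁅a' + D (D a'), -(D (D a))⁆ := (lie_skew _ _).symm
          rw [this, map_neg, map_neg, hBrPM (hPker a') (hQmem a)]
        have hPb : D (D ⁅-(D (D a)), -(D (D a'))⁆) = 0 := by
          rw [hBrMM (hQmem a) (hQmem a'), map_zero]
        rw [e2, map_add, map_add, hMb, hPb]
        abel
      have h8 : ⁅-(D (D a')), -(D (D a))⁆ = ⁅-(D (D a)), -(D (D a'))⁆ := by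
        rw [← hP1, ← hP2, heq]
      have h9 : ⁅-(D (D a)), -(D (D a'))⁆ = -⁅-(D (D a)), -(D (D a'))⁆ := by
        nth_rewrite 2 [← h8]
        exact (lie_skew _ _).symm
      have h10 : (2:ℝ) • ⁅-(D (D a)), -(D (D a'))⁆ = 0 := by
        have := congrArg (fun t => t + ⁅-(D (D a)), -(D (D a'))⁆) h9
        simp only [neg_add_cancel] at this
        rw [← this]; module
      have := smul_eq_zero.mp h10
      rcases this with h | h
      · norm_num at h
      · exact h
    -- L5 : P-components bracket Q-components to zero
    have L5 : ∀ a ∈ A, ∀ a' ∈ A, ⁅a + D (D a), -(D (D a'))⁆ = (0:g) := by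
      intro a ha a' ha'
      -- b₂ = ⁅Q a, a'⁆ ∈ A lies in ker(D²+1), hence vanishes
      have hb2 : ⁅-(D (D a)), a'⁆ ∈ A := A.lie_mem ha'
      have e2 : ⁅-(D (D a)), a'⁆ = ⁅-(D (D a)), a' + D (D a')⁆ + ⁅-(D (D a)), -(D (D a'))⁆ := by
        rw [← lie_add, ← hPQ a']
      have hMb : D (D ⁅-(D (D a)), a' + D (D a')⁆) = -⁅-(D (D a)), a' + D (D a')⁆ := by
        have : ⁅-(D (D a)), a' + D (D a')⁆ = -⁅a' + D (D a'), -(D (D a))⁆ := (lie_skew _ _).symm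
        rw [this, map_neg, map_neg, hBrPM (hPker a') (hQmem a)]
      have hGm2 : D (D ⁅-(D (D a)), a'⁆) = -⁅-(D (D a)), a'⁆ := by
        rw [e2, L4 a ha a' ha', add_zero, hMb]
      have hb20 : ⁅-(D (D a)), a'⁆ = 0 := L1 _ hb2 hGm2
      have h1 : ⁅-(D (D a)), a' + D (D a')⁆ = 0 := by
        have := hb20
        rw [e2, L4 a ha a' ha', add_zero] at this
        exact this
      -- now use the splitting relation
      have hs := hsplit a ha a' ha'
      -- ⁅Q a, P a'⁆ = 0 gives ⁅P a, Q a'⁆ = 0 ; but careful with which is which :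
      -- hsplit : ⁅P a, Q a'⁆ + ⁅Q a, P a'⁆ = 0 and h1 : ⁅Q a, P a'⁆ = 0
      rw [h1, add_zero] at hs
      exact hs
    -- L7 : P-components are zero
    have L7 : ∀ a ∈ A, a + D (D a) = (0:g) := by
      intro a ha
      apply hS1 _ (hPker a)
      intro u hu
      have hbA : ⁅u, a⁆ ∈ A := A.lie_mem ha
      -- ⁅P a, u⁆ = -(Q-component of ⁅u, a⁆)
      have hQb : -(D (D ⁅u, a⁆)) = ⁅u, a + D (D a)⁆ := by
        have e1 : ⁅u, a⁆ = ⁅u, a + D (D a)⁆ + ⁅u, -(D (D a))⁆ := by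
          rw [← lie_add, ← hPQ a]
        have hM : D (D ⁅u, a + D (D a)⁆) = -⁅u, a + D (D a)⁆ := by
          have : ⁅u, a + D (D a)⁆ = -⁅a + D (D a), u⁆ := (lie_skew _ _).symm
          rw [this, map_neg, map_neg, hBrPM (hPker a) hu]
        have hP : D (D ⁅u, -(D (D a))⁆) = 0 := by
          rw [hBrMM hu (hQmem a), map_zero]
        rw [e1, map_add, map_add, hM, hP, add_zero, neg_neg]
      have hkey : ⁅a + D (D a), ⁅a + D (D a), u⁆⁆ = 0 := by
        have h1 : ⁅a + D (D a), u⁆ = -⁅u, a + D (D a)⁆ := (lie_skew _ _).symm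
        rw [h1, ← hQb, lie_neg, lie_neg]
        -- goal : - -⁅P a, D (D ⁅u,a⁆)⁆ = 0 ; note D (D ⁅u,a⁆) = -(Q ⁅u,a⁆)
        have h2 : D (D ⁅u, a⁆) = -(-(D (D ⁅u, a⁆))) := by rw [neg_neg]
        rw [neg_neg, h2, lie_neg, L5 a ha ⁅u, a⁆ hbA, neg_zero]
      have hGm' : D (D ⁅a + D (D a), u⁆) = -⁅a + D (D a), u⁆ := hBrPM (hPker a) hu
      have hBz : B ⁅a + D (D a), u⁆ ⁅a + D (D a), u⁆ = 0 := by
        have h3 := hinv (a + D (D a)) u ⁅a + D (D a), u⁆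
        rw [hkey] at h3
        simp only [map_zero, add_zero] at h3
        exact h3
      by_contra hne
      exact absurd hBz (ne_of_gt (hS2 _ hGm' hne))
    -- conclusion of the key lemma
    intro a ha
    have hp := L7 a ha
    have haQ : a = -(D (D a)) := by
      have := congrArg (fun t => t - D (D a)) hp
      simpa [sub_eq_iff_eq_add] using this
    refine L1 a ha ?_
    rw [haQ]
    exact hQmem a
  -- B is reflexive and Lie-invariant
  have hrefl : B.IsRefl := fun x y h => by rw [hsymm]; exact h
  have hlieinv : B.lieInvariant g := by
    intro x y z
    have := hinv x y z
    linarith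
  -- every abelian ideal is central
  have hCENT : ∀ A : LieIdeal ℝ g, (∀ a ∈ A, ∀ b ∈ A, ⁅a, b⁆ = (0:g)) →
      ∀ a ∈ A, ∀ x : g, ⁅a, x⁆ = 0 := by
    intro A hab
    set Ao := LieAlgebra.InvariantForm.orthogonal B hlieinv A with hAodef
    have htriv : ∀ c ∈ A ⊓ Ao, c = (0:g) := by
      apply hLEM
      · intro p hp q hq
        exact hab p ((LieSubmodule.mem_inf _ _ _).mp hp).1 q ((LieSubmodule.mem_inf _ _ _).mp hq).1
      · intro p hp q hq
        have h1 := ((LieSubmodule.mem_inf _ _ _).mp hq).2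
        rw [LieAlgebra.InvariantForm.mem_orthogonal] at h1
        exact h1 p ((LieSubmodule.mem_inf _ _ _).mp hp).1
    have hrestrict : (B.restrict (LieSubmodule.toSubmodule A)).Nondegenerate := by
      refine (LinearMap.IsRefl.nondegenerate_iff_separatingLeft ?_).mpr ?_
      · intro x y h; exact hrefl _ _ h
      rintro ⟨p, hp⟩ hpz
      have h2 : ∀ q ∈ A, B q p = 0 := by
        intro q hq
        rw [hsymm]
        exact hpz ⟨q, hq⟩
      have hmem : p ∈ Ao := by
        rw [hAodef, LieAlgebra.InvariantForm.mem_orthogonal]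
        exact h2
      have := htriv p ((LieSubmodule.mem_inf _ _ _).mpr ⟨hp, hmem⟩)
      exact Subtype.ext this
    have hcompl : IsCompl (LieSubmodule.toSubmodule A)
        (B.orthogonal (LieSubmodule.toSubmodule A)) :=
      (LinearMap.BilinForm.restrict_nondegenerate_iff_isCompl_orthogonal hrefl).mp hrestrict
    intro a ha x
    have hx : x ∈ LieSubmodule.toSubmodule A ⊔ B.orthogonal (LieSubmodule.toSubmodule A) := by
      rw [hcompl.sup_eq_top]; trivial
    obtain ⟨u, hu, w, hw, rfl⟩ := Submodule.mem_sup.mp hx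
    rw [lie_add]
    have h1 : ⁅a, u⁆ = 0 := hab a ha u hu
    have h2 : ⁅a, w⁆ = 0 := by
      apply htriv
      refine (LieSubmodule.mem_inf _ _ _).mpr ⟨?_, ?_⟩
      · rw [← lie_skew]
        exact neg_mem (A.lie_mem ha)
      · have hwAo : w ∈ Ao := hw
        exact Ao.lie_mem hwAo
    rw [h1, h2, add_zero]
  -- the center of g
  set z : LieIdeal ℝ g := LieAlgebra.center ℝ g with hzdef
  have hzmem : ∀ c : g, c ∈ z ↔ ∀ x : g, ⁅x, c⁆ = 0 := by
    intro c
    exact LieModule.mem_maxTrivSubmodule ℝ g g c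
  have hzab : ∀ a ∈ z, ∀ b ∈ z, ⁅a, b⁆ = (0:g) := by
    intro a _ b hb
    exact (hzmem b).mp hb a
  set Ko := LieAlgebra.InvariantForm.orthogonal B hlieinv z with hKodef
  have hztriv : ∀ c ∈ z ⊓ Ko, c = (0:g) := by
    apply hLEM
    · intro p hp q hq
      exact hzab p ((LieSubmodule.mem_inf _ _ _).mp hp).1 q ((LieSubmodule.mem_inf _ _ _).mp hq).1
    · intro p hp q hq
      have h1 := ((LieSubmodule.mem_inf _ _ _).mp hq).2
      rw [LieAlgebra.InvariantForm.mem_orthogonal] at h1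
      exact h1 p ((LieSubmodule.mem_inf _ _ _).mp hp).1
  have hrestrictz : (B.restrict (LieSubmodule.toSubmodule z)).Nondegenerate := by
    refine (LinearMap.IsRefl.nondegenerate_iff_separatingLeft ?_).mpr ?_
    · intro x y h; exact hrefl _ _ h
    rintro ⟨p, hp⟩ hpz
    have h2 : ∀ q ∈ z, B q p = 0 := by
      intro q hq
      rw [hsymm]
      exact hpz ⟨q, hq⟩
    have hmem : p ∈ Ko := by
      rw [hKodef, LieAlgebra.InvariantForm.mem_orthogonal]
      exact h2
    have := hztriv p ((LieSubmodule.mem_inf _ _ _).mpr ⟨hp, hmem⟩)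
    exact Subtype.ext this
  have hcomplz : IsCompl (LieSubmodule.toSubmodule z)
      (B.orthogonal (LieSubmodule.toSubmodule z)) :=
    (LinearMap.BilinForm.restrict_nondegenerate_iff_isCompl_orthogonal hrefl).mp hrestrictz
  have hdecomp : ∀ x : g, ∃ c ∈ z, ∃ k, k ∈ Ko ∧ x = c + k := by
    intro x
    have hx : x ∈ LieSubmodule.toSubmodule z ⊔ B.orthogonal (LieSubmodule.toSubmodule z) := by
      rw [hcomplz.sup_eq_top]; trivial
    obtain ⟨c, hc, k, hk, rfl⟩ := Submodule.mem_sup.mp hx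
    exact ⟨c, hc, k, hk, rfl⟩
  -- main claim : Ko = ⊥
  have hKbot : ∀ k ∈ Ko, k = (0:g) := by
    by_contra hKne
    push_neg at hKne
    obtain ⟨x0, hx0K, hx0ne⟩ := hKne
    -- Ko as a Lie ideal of g (kept abstract for performance)
    obtain ⟨KI, hKI⟩ : ∃ KI : LieIdeal ℝ g, KI = Ko := ⟨Ko, rfl⟩
    have hKImem : ∀ w : g, w ∈ KI ↔ w ∈ Ko := fun w => by rw [hKI]
    have hx0KI : x0 ∈ KI := (hKImem x0).mpr hx0K
    set f : ↥KI →ₗ[ℝ] g := KI.incl.toLinearMap with hfdef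
    have hfval : ∀ u : ↥KI, f u = (u : g) := fun u => rfl
    set Φ : LinearMap.BilinForm ℝ ↥KI := B.compl₁₂ f f with hΦdef
    have hΦval : ∀ u v : ↥KI, Φ u v = B (u : g) (v : g) := fun u v => rfl
    have hbr : ∀ u v : ↥KI, ((⁅u, v⁆ : ↥KI) : g) = ⁅(u : g), (v : g)⁆ := fun u v => rfl
    have hΦnd : Φ.Nondegenerate := by
      refine (LinearMap.IsRefl.nondegenerate_iff_separatingLeft ?_).mpr ?_
      · intro x y h; rw [hΦval] at h ⊢; rw [hsymm]; exact h
      intro u hu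
      have hg : ∀ w : g, B (u : g) w = 0 := by
        intro w
        obtain ⟨c, hc, k, hk, rfl⟩ := hdecomp w
        have h1 : B (u : g) c = 0 := by
          have h2 : ∀ q ∈ z, B q (u : g) = 0 :=
            (LieAlgebra.InvariantForm.mem_orthogonal B hlieinv z ((u : g))).mp
              ((hKImem _).mp u.2)
          rw [hsymm]
          exact h2 c hc
        have h3 : B (u : g) k = 0 := by
          have := hu ⟨k, (hKImem k).mpr hk⟩
          rw [hΦval] at this
          exact this
        rw [map_add, h1, h3, add_zero]
      exact Subtype.ext (hnd.1 _ hg)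
    have hΦinv : Φ.lieInvariant ↥KI := by
      intro x y w
      rw [hΦval, hΦval, hbr, hbr]
      have := hinv (x : g) (y : g) (w : g)
      linarith
    have hΦrefl : Φ.IsRefl := by
      intro x y h
      rw [hΦval] at h ⊢
      rw [hsymm]
      exact h
    -- pushforward of ideals of ↥KI to ideals of g
    have hpushlie : ∀ J : LieIdeal ℝ ↥KI, ∀ x m : g,
        m ∈ Submodule.map f (LieSubmodule.toSubmodule J) →
        ⁅x, m⁆ ∈ Submodule.map f (LieSubmodule.toSubmodule J) := by
      intro J x m hm
      obtain ⟨j, hj, rfl⟩ := hm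
      obtain ⟨c, hc, k, hk, rfl⟩ := hdecomp x
      have h1 : ⁅c, f j⁆ = 0 := by
        rw [← lie_skew, (hzmem c).mp hc (f j), neg_zero]
      have h2 : ⁅k, f j⁆ = f ⁅(⟨k, (hKImem k).mpr hk⟩ : ↥KI), j⁆ := rfl
      rw [add_lie, h1, zero_add, h2]
      exact ⟨⁅(⟨k, (hKImem k).mpr hk⟩ : ↥KI), j⁆, J.lie_mem hj, rfl⟩
    -- abelian atoms are impossible
    have hatoms : ∀ J : LieIdeal ℝ ↥KI, IsAtom J → ¬IsLieAbelian ↥J := by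
      intro J hJatom hJab
      set AJ : LieIdeal ℝ g :=
        { Submodule.map f (LieSubmodule.toSubmodule J) with
          lie_mem := fun {x m} hm => hpushlie J x m hm } with hAJdef
      have hAJmem : ∀ m : g, m ∈ AJ ↔ ∃ j : ↥KI, j ∈ J ∧ (j : g) = m := by
        intro m
        constructor
        · rintro ⟨j, hj, rfl⟩; exact ⟨j, hj, rfl⟩
        · rintro ⟨j, hj, rfl⟩; exact ⟨j, hj, rfl⟩
      have hAJab : ∀ a ∈ AJ, ∀ b ∈ AJ, ⁅a, b⁆ = (0:g) := by
        intro a ha b hb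
        obtain ⟨j1, hj1, rfl⟩ := (hAJmem a).mp ha
        obtain ⟨j2, hj2, rfl⟩ := (hAJmem b).mp hb
        have h0 : ⁅(⟨j1, hj1⟩ : ↥J), (⟨j2, hj2⟩ : ↥J)⁆ = 0 := trivial_lie_zero _ _ _ _
        have h1 : ⁅j1, j2⁆ = (0 : ↥KI) := by
          have := congrArg (fun t : ↥J => (t : ↥KI)) h0
          exact this
        have h2 : ⁅(j1 : g), (j2 : g)⁆ = ((⁅j1, j2⁆ : ↥KI) : g) := (hbr j1 j2).symm
        rw [h2, h1]
        rfl
      -- an atom is nonzero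
      have hJne : ∃ m ∈ J, m ≠ (0 : ↥KI) := by
        by_contra hno
        push_neg at hno
        exact hJatom.1 ((LieSubmodule.eq_bot_iff J).mpr hno)
      obtain ⟨j0, hj0, hj0ne⟩ := hJne
      have hcent := hCENT AJ hAJab (j0 : g) ((hAJmem _).mpr ⟨j0, hj0, rfl⟩)
      have hz0 : (j0 : g) ∈ z := by
        rw [hzmem]
        intro x
        rw [← lie_skew, hcent x, neg_zero]
      have := hztriv (j0 : g) ((LieSubmodule.mem_inf _ _ _).mpr ⟨hz0, (hKImem _).mp j0.2⟩)
      exact hj0ne (Subtype.ext this)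
    -- semisimplicity
    haveI hss : LieAlgebra.IsSemisimple ℝ ↥KI :=
      LieAlgebra.InvariantForm.isSemisimple_of_nondegenerate Φ hΦnd hΦinv hΦrefl hatoms
    have hne_top : (⊤ : LieIdeal ℝ ↥KI) ≠ ⊥ := by
      intro h
      have h1 : (⟨x0, hx0KI⟩ : ↥KI) ∈ (⊤ : LieIdeal ℝ ↥KI) := LieSubmodule.mem_top _
      rw [h, LieSubmodule.mem_bot] at h1
      exact hx0ne (congrArg Subtype.val h1)
    obtain ⟨J, hJatom⟩ : ∃ J : LieIdeal ℝ ↥KI, IsAtom J := by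
      by_contra hno
      push_neg at hno
      have h1 : {I : LieIdeal ℝ ↥KI | IsAtom I} = ∅ := by
        ext I; simp [hno I]
      have h2 := LieAlgebra.IsSemisimple.sSup_atoms_eq_top (R := ℝ) (L := ↥KI)
      rw [h1, sSup_empty] at h2
      exact hne_top h2.symm
    haveI hJsimple : LieAlgebra.IsSimple ℝ ↥J :=
      LieAlgebra.IsSemisimple.isSimple_of_isAtom J hJatom
    -- push J forward to an ideal of g
    set AJ : LieIdeal ℝ g :=
      { Submodule.map f (LieSubmodule.toSubmodule J) with
        lie_mem := fun {x m} hm => hpushlie J x m hm } with hAJdef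
    have hAJmem : ∀ m : g, m ∈ AJ ↔ ∃ j : ↥KI, j ∈ J ∧ (j : g) = m := by
      intro m
      constructor
      · rintro ⟨j, hj, rfl⟩; exact ⟨j, hj, rfl⟩
      · rintro ⟨j, hj, rfl⟩; exact ⟨j, hj, rfl⟩
    -- the canonical map ↥J → ↥AJ
    set μ : ↥J → ↥AJ := fun j => ⟨((j : ↥KI) : g), (hAJmem _).mpr ⟨j, j.2, rfl⟩⟩ with hμdef
    have hμval : ∀ j : ↥J, ((μ j : ↥AJ) : g) = ((j : ↥KI) : g) := fun j => rfl
    have hμinj : Function.Injective μ := by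
      intro p q h
      have h1 := congrArg (fun t : ↥AJ => (t : g)) h
      exact Subtype.ext (Subtype.ext h1)
    have hμsurj : ∀ m : ↥AJ, ∃ j : ↥J, μ j = m := by
      rintro ⟨m, hm⟩
      obtain ⟨j, hj, hjm⟩ := (hAJmem m).mp hm
      exact ⟨⟨j, hj⟩, Subtype.ext hjm⟩
    have hμbr : ∀ p q : ↥J, μ ⁅p, q⁆ = ⁅μ p, μ q⁆ := fun p q => rfl
    have hμadd : ∀ p q : ↥J, μ (p + q) = μ p + μ q := fun p q => rfl
    have hμsmul : ∀ (c : ℝ) (p : ↥J), μ (c • p) = c • μ p := fun c p => rfl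
    have hμzero : μ 0 = 0 := rfl
    apply hnosimple
    refine ⟨AJ, ?_, ?_⟩
    · -- AJ ≠ ⊥
      have hJne : ∃ m ∈ J, m ≠ (0 : ↥KI) := by
        by_contra hno
        push_neg at hno
        exact hJatom.1 ((LieSubmodule.eq_bot_iff J).mpr hno)
      obtain ⟨j0, hj0, hj0ne⟩ := hJne
      intro hbot
      have h1 : (j0 : g) ∈ AJ := (hAJmem _).mpr ⟨j0, hj0, rfl⟩
      rw [hbot, LieSubmodule.mem_bot] at h1
      exact hj0ne (Subtype.ext h1)
    · -- ↥AJ is a simple Lie algebra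
      constructor
      · intro I'
        set J' : LieIdeal ℝ ↥J :=
          { carrier := {j : ↥J | μ j ∈ I'}
            add_mem' := by
              intro p q hp hq
              simp only [Set.mem_setOf_eq] at hp hq ⊢
              rw [hμadd]
              exact I'.add_mem hp hq
            zero_mem' := by
              simp only [Set.mem_setOf_eq]
              rw [hμzero]
              exact I'.zero_mem
            smul_mem' := by
              intro c p hp
              simp only [Set.mem_setOf_eq] at hp ⊢
              rw [hμsmul]
              exact I'.smul_mem c hp
            lie_mem := by
              intro x m hm
              simp only [Set.mem_setOf_eq] at hm ⊢
              rw [hμbr]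
              exact I'.lie_mem hm } with hJ'def
        have hJ'mem : ∀ j : ↥J, j ∈ J' ↔ μ j ∈ I' := fun j => Iff.rfl
        rcases LieAlgebra.IsSimple.eq_bot_or_eq_top J' with hB | hT
        · left
          rw [LieSubmodule.eq_bot_iff]
          intro m hm
          obtain ⟨j, rfl⟩ := hμsurj m
          have h1 : j ∈ J' := (hJ'mem j).mpr hm
          rw [hB, LieSubmodule.mem_bot] at h1
          rw [h1, hμzero]
        · right
          rw [eq_top_iff]
          intro m _
          obtain ⟨j, rfl⟩ := hμsurj m
          have h1 : j ∈ J' := by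
            rw [hT]
            exact LieSubmodule.mem_top _
          exact (hJ'mem j).mp h1
      · intro habJ
        apply LieAlgebra.IsSimple.non_abelian (R := ℝ) (L := ↥J)
        constructor
        intro p q
        apply hμinj
        rw [hμbr, hμzero]
        exact trivial_lie_zero _ _ _ _
  -- hence the center is everything
  have habel : ∀ x y : g, ⁅x, y⁆ = 0 := by
    have hztop : ∀ x : g, x ∈ z := by
      intro x
      obtain ⟨c, hc, k, hk, rfl⟩ := hdecomp x
      rw [hKbot k hk, add_zero]
      exact hc
    intro x y
    have := (hzmem y).mp (hztop y) x
    exact this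
  refine ⟨habel, ?_, ?_⟩
  · -- positive definiteness
    intro x hx
    have hker : ∀ w : g, D w = 0 → w = 0 := by
      intro w hw
      have hmem := hspan w hw
      have hle : Submodule.span ℝ Sgen ≤ ⊥ := by
        apply Submodule.span_le.mpr
        rintro s ⟨u, hu, v, hv, rfl⟩
        simp [habel u v]
      simpa using hle hmem
    have hGm : D (D x) = -x := by
      have h0 : D (D (D x) + x) = 0 := by
        rw [map_add, hD3' x, neg_add_cancel]
      have := hker _ h0
      have h2 := congrArg (fun t => t - x) this
      simpa [sub_eq_iff_eq_add] using h2
    exact hS2 x hGm hx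
  · -- D² = -id
    have hker : ∀ w : g, D w = 0 → w = 0 := by
      intro w hw
      have hmem := hspan w hw
      have hle : Submodule.span ℝ Sgen ≤ ⊥ := by
        apply Submodule.span_le.mpr
        rintro s ⟨u, hu, v, hv, rfl⟩
        simp [habel u v]
      simpa using hle hmem
    apply LinearMap.ext
    intro x
    have h0 : D (D (D x) + x) = 0 := by
      rw [map_add, hD3' x, neg_add_cancel]
    have h1 := hker _ h0
    have h2 := congrArg (fun t => t - x) h1
    simp only [LinearMap.comp_apply, LinearMap.neg_apply, LinearMap.id_apply]
    simpa [sub_eq_iff_eq_add] using h2
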